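/- (Lemma 7.3, structure of the changeable part.) Under the four-vertex hypotheses, let the changeable part be the multiset ω̲̂ := ω̂ + β̂₀ + γ̂₀ + δ̂₀, and suppose ω̲̂ is nonempty. Then for every γ ∈ γ̂₁ and δ ∈ δ̂₁, every element ξ of ω̲̂ has the form ξ = γ + δ + β for some β ∈ β̂₁. -/
import Mathlib


/-- Two multisets of vectors of `V` are *congruent mod `ρ`* if their images under the
quotient map `V → V ⧸ span {ρ}` are equal as multisets. -/
def CongMod {V : Type*} [AddCommGroup V] [Module (ZMod 2) V] (ρ : V)
    (A B : Multiset V) : Prop :=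
  A.map ⇑(Submodule.span (ZMod 2) {ρ}).mkQ = B.map ⇑(Submodule.span (ZMod 2) {ρ}).mkQ


section Aux

variable {V : Type*} [AddCommGroup V] [Module (ZMod 2) V]

lemma char2_add_self (x : V) : x + x = 0 := by
  have h : (2 : ZMod 2) • x = 0 := by
    rw [show (2 : ZMod 2) = 0 by decide, zero_smul]
  rwa [two_smul] at h

lemma quot_eq_iff {ρ : V} (a v : V) :
    (Submodule.span (ZMod 2) {ρ}).mkQ a = (Submodule.span (ZMod 2) {ρ}).mkQ v ↔
      a = v ∨ a = v + ρ := by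
  rw [Submodule.mkQ_apply, Submodule.mkQ_apply, Submodule.Quotient.eq,
    Submodule.mem_span_singleton]
  constructor
  · rintro ⟨c, hc⟩
    have hc2 : c = 0 ∨ c = 1 := by clear hc; revert c; decide
    rcases hc2 with rfl | rfl
    · rw [zero_smul] at hc
      exact Or.inl (sub_eq_zero.mp hc.symm)
    · rw [one_smul] at hc
      right
      rw [eq_comm, sub_eq_iff_eq_add] at hc
      rw [hc, add_comm]
  · rintro (rfl | rfl)
    · exact ⟨0, by simp⟩
    · exact ⟨1, by simp⟩

lemma count_pair [DecidableEq V] {ρ : V}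
    [DecidableEq (V ⧸ Submodule.span (ZMod 2) {ρ})] (hρ : ρ ≠ 0) (X : Multiset V) (v : V) :
    (X.map ⇑(Submodule.span (ZMod 2) {ρ}).mkQ).count ((Submodule.span (ZMod 2) {ρ}).mkQ v)
      = X.count v + X.count (v + ρ) := by
  induction X using Multiset.induction with
  | empty => simp
  | cons a s ih =>
    rw [Multiset.map_cons, Multiset.count_cons, Multiset.count_cons, Multiset.count_cons, ih]
    have key : ((Submodule.span (ZMod 2) {ρ}).mkQ v = (Submodule.span (ZMod 2) {ρ}).mkQ a)
        ↔ (v = a ∨ v = a + ρ) := quot_eq_iff v a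
    by_cases h1 : v = a
    · subst h1
      have h2 : ¬ (v + ρ = v) := fun h => hρ (by simpa using h)
      simp [key, h2]
      omega
    · by_cases h2 : v + ρ = a
      · have h3 : v = a + ρ := by rw [← h2, add_assoc, char2_add_self, add_zero]
        have hπ : (Submodule.span (ZMod 2) {ρ}).mkQ v = (Submodule.span (ZMod 2) {ρ}).mkQ a :=
          key.mpr (Or.inr h3)
        simp [hπ, h1, h2]
        omega
      · have hπ : ¬ ((Submodule.span (ZMod 2) {ρ}).mkQ v = (Submodule.span (ZMod 2) {ρ}).mkQ a) := by
          rw [key]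
          rintro (rfl | h3)
          · exact h1 rfl
          · exact h2 (by rw [h3, add_assoc, char2_add_self, add_zero])
        rw [if_neg hπ, if_neg h1, if_neg h2]
        omega

lemma cong_count [DecidableEq V] {ρ : V} (hρ : ρ ≠ 0) {X Y : Multiset V}
    (h : CongMod ρ X Y) (v w : V) (hw : w = v + ρ) :
    X.count v + X.count w = Y.count v + Y.count w := by
  subst hw
  letI : DecidableEq (V ⧸ Submodule.span (ZMod 2) {ρ}) := Classical.decEq _
  have h2 := congrArg (Multiset.count ((Submodule.span (ZMod 2) {ρ}).mkQ v)) h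
  rwa [count_pair hρ X v, count_pair hρ Y v] at h2

end Aux

/- Four-vertex hypotheses: `W, B, C, D, E, H, L` model `ω̂, β̂, γ̂, δ̂, ε̂, η̂, λ̂`. -/
theorem four_fixed_points_changeable_part
    {V : Type*} [AddCommGroup V] [Module (ZMod 2) V] [FiniteDimensional (ZMod 2) V]
    [DecidableEq V]
    (k n : ℕ) (hk : Module.finrank (ZMod 2) V = k) (hk3 : 3 ≤ k)
    (W B C D E H L : Multiset V)
    (hW0 : ∀ v ∈ W, v ≠ (0 : V)) (hB0 : ∀ v ∈ B, v ≠ (0 : V)) (hC0 : ∀ v ∈ C, v ≠ (0 : V))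
    (hD0 : ∀ v ∈ D, v ≠ (0 : V)) (hE0 : ∀ v ∈ E, v ≠ (0 : V)) (hH0 : ∀ v ∈ H, v ≠ (0 : V))
    (hL0 : ∀ v ∈ L, v ≠ (0 : V))
    (Ap Aq Ar As : Multiset V)
    (hAp : Ap = W + B + C + D) (hAq : Aq = W + B + E + H)
    (hAr : Ar = W + E + C + L) (hAs : As = W + D + H + L)
    (hcardp : Multiset.card Ap = n) (hcardq : Multiset.card Aq = n)
    (hcardr : Multiset.card Ar = n) (hcards : Multiset.card As = n)
    (hpq : Ap ≠ Aq) (hpr : Ap ≠ Ar) (hps : Ap ≠ As)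
    (hqr : Aq ≠ Ar) (hqs : Aq ≠ As) (hrs : Ar ≠ As)
    (hspanp : Submodule.span (ZMod 2) {v : V | v ∈ Ap} = ⊤)
    (hspanq : Submodule.span (ZMod 2) {v : V | v ∈ Aq} = ⊤)
    (hspanr : Submodule.span (ZMod 2) {v : V | v ∈ Ar} = ⊤)
    (hspans : Submodule.span (ZMod 2) {v : V | v ∈ As} = ⊤)
    (hWB : ∀ v, v ∈ W → v ∈ B → False) (hWC : ∀ v, v ∈ W → v ∈ C → False)
    (hWD : ∀ v, v ∈ W → v ∈ D → False) (hWE : ∀ v, v ∈ W → v ∈ E → False)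
    (hWH : ∀ v, v ∈ W → v ∈ H → False) (hWL : ∀ v, v ∈ W → v ∈ L → False)
    (hBC : ∀ v, v ∈ B → v ∈ C → False) (hBD : ∀ v, v ∈ B → v ∈ D → False)
    (hBE : ∀ v, v ∈ B → v ∈ E → False) (hBH : ∀ v, v ∈ B → v ∈ H → False)
    (hCD : ∀ v, v ∈ C → v ∈ D → False) (hCE : ∀ v, v ∈ C → v ∈ E → False)
    (hCL : ∀ v, v ∈ C → v ∈ L → False)
    (hDH : ∀ v, v ∈ D → v ∈ H → False) (hDL : ∀ v, v ∈ D → v ∈ L → False)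
    (hEH : ∀ v, v ∈ E → v ∈ H → False) (hEL : ∀ v, v ∈ E → v ∈ L → False)
    (hHL : ∀ v, v ∈ H → v ∈ L → False)
    (hP2B : ∀ β ∈ B, CongMod β Ap Aq)
    (hP2C : ∀ γ ∈ C, CongMod γ Ap Ar)
    (hP2D : ∀ δ ∈ D, CongMod δ Ap As)
    (hP2E : ∀ ε ∈ E, CongMod ε Aq Ar)
    (hP2H : ∀ η ∈ H, CongMod η Aq As)
    (hP2L : ∀ lam ∈ L, CongMod lam Ar As)
    (hP2W : ∀ ξ ∈ W, CongMod ξ Ap Aq ∧ CongMod ξ Ap Ar ∧ CongMod ξ Ap As ∧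
        CongMod ξ Aq Ar ∧ CongMod ξ Aq As ∧ CongMod ξ Ar As)
    (B0 B1 L1 C0 C1 H1 D0 D1 E1 : Multiset V)
    (hB0def : B0 = B ∩ L) (hB1def : B1 = B - B0) (hL1def : L1 = L - B0)
    (hC0def : C0 = C ∩ H) (hC1def : C1 = C - C0) (hH1def : H1 = H - C0)
    (hD0def : D0 = D ∩ E) (hD1def : D1 = D - D0) (hE1def : E1 = E - D0)
    (Wc : Multiset V) (hWc : Wc = W + B0 + C0 + D0) (hWcne : Wc ≠ 0) :
    ∀ γ ∈ C1, ∀ δ ∈ D1, ∀ ξ ∈ Wc, ∃ β ∈ B1, ξ = γ + δ + β := by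
  subst hAp hAq hAr hAs hB0def hC0def hD0def hB1def hC1def hD1def hWc
  intro γ hγ δ hδ ξ hξ
  have z : ∀ (X Y : Multiset V), (∀ v, v ∈ X → v ∈ Y → False) →
      ∀ v : V, v ∈ X → Multiset.count v Y = 0 :=
    fun X Y hXY v hv => Multiset.count_eq_zero.mpr fun h => hXY v hv h
  have hγC : Multiset.count γ H < Multiset.count γ C := by
    have h1 : 0 < Multiset.count γ (C - C ∩ H) := Multiset.count_pos.mpr hγ
    rw [Multiset.count_sub, Multiset.count_inter] at h1
    omega
  have hγmem : γ ∈ C := Multiset.count_pos.mp (by omega)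
  have hγ0 : γ ≠ 0 := hC0 γ hγmem
  have hδD : Multiset.count δ E < Multiset.count δ D := by
    have h1 : 0 < Multiset.count δ (D - D ∩ E) := Multiset.count_pos.mpr hδ
    rw [Multiset.count_sub, Multiset.count_inter] at h1
    omega
  have hδmem : δ ∈ D := Multiset.count_pos.mp (by omega)
  have hδ0 : δ ≠ 0 := hD0 δ hδmem
  have hw1 : γ + δ = γ + ξ + (δ + ξ) := by
    rw [show γ + ξ + (δ + ξ) = γ + δ + (ξ + ξ) by abel, char2_add_self, add_zero]
  have hw2 : γ + δ = δ + ξ + (γ + ξ) := by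
    rw [show δ + ξ + (γ + ξ) = γ + δ + (ξ + ξ) by abel, char2_add_self, add_zero]
  have zBγ := z C B (fun v a b => hBC v b a) γ hγmem
  have zDγ := z C D hCD γ hγmem
  have zEγ := z C E hCE γ hγmem
  have zLγ := z C L hCL γ hγmem
  have zBδ := z D B (fun v a b => hBD v b a) δ hδmem
  have zCδ := z D C (fun v a b => hCD v b a) δ hδmem
  have zHδ := z D H hDH δ hδmem
  have zLδ := z D L hDL δ hδmem
  suffices hkey : Multiset.count (γ + δ + ξ) L < Multiset.count (γ + δ + ξ) B by
    refine ⟨γ + δ + ξ, ?_, ?_⟩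
    · rw [← Multiset.count_pos, Multiset.count_sub, Multiset.count_inter]
      omega
    · rw [show γ + δ + (γ + δ + ξ) = γ + γ + (δ + δ) + ξ by abel, char2_add_self,
        char2_add_self, zero_add, zero_add]
  have J1 := cong_count hγ0 (hP2C γ hγmem) δ (γ + δ) (by abel)
  have J2 := cong_count hδ0 (hP2D δ hδmem) γ (γ + δ) (by abel)
  simp only [Multiset.count_add] at J1 J2
  have coreWB : ξ ≠ 0 → CongMod ξ (W + B + C + D) (W + B + E + H) →
      CongMod ξ (W + E + C + L) (W + D + H + L) →
      Multiset.count (γ + δ + ξ) L < Multiset.count (γ + δ + ξ) B := by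
    intro hξ0 h1 h2
    have Q1 := cong_count hξ0 h1 γ (γ + ξ) rfl
    have Q2 := cong_count hξ0 h2 γ (γ + ξ) rfl
    have Q3 := cong_count hξ0 h1 δ (δ + ξ) rfl
    have Q4 := cong_count hξ0 h2 δ (δ + ξ) rfl
    simp only [Multiset.count_add] at Q1 Q2 Q3 Q4
    have hηmem : γ + ξ ∈ H := Multiset.count_pos.mp (by omega)
    have hη0 : γ + ξ ≠ 0 := hH0 _ hηmem
    have hεmem : δ + ξ ∈ E := Multiset.count_pos.mp (by omega)
    have zBε := z E B (fun v a b => hBE v b a) _ hεmem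
    have R1 := cong_count hγ0 (hP2C γ hγmem) (δ + ξ) (γ + δ + ξ) (by abel)
    have V8 := cong_count hη0 (hP2H (γ + ξ) hηmem) δ (γ + δ + ξ) (by abel)
    simp only [Multiset.count_add] at R1 V8
    omega
  rw [Multiset.mem_add, Multiset.mem_add, Multiset.mem_add] at hξ
  rcases hξ with ((hWmem | hBL) | hCH) | hDE
  · exact coreWB (hW0 ξ hWmem) (hP2W ξ hWmem).1 (hP2W ξ hWmem).2.2.2.2.2
  · rw [Multiset.mem_inter] at hBL
    exact coreWB (hB0 ξ hBL.1) (hP2B ξ hBL.1) (hP2L ξ hBL.2)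
  · rw [Multiset.mem_inter] at hCH
    have hξ0 : ξ ≠ 0 := hC0 ξ hCH.1
    have h1 := hP2C ξ hCH.1
    have h2 := hP2H ξ hCH.2
    have I1 := cong_count hξ0 h1 δ (δ + ξ) rfl
    have I2 := cong_count hξ0 h2 δ (δ + ξ) rfl
    have I3 := cong_count hξ0 h1 γ (γ + ξ) rfl
    have I4 := cong_count hξ0 h2 γ (γ + ξ) rfl
    have I5 := cong_count hξ0 h1 (γ + δ) (γ + δ + ξ) rfl
    have I6 := cong_count hξ0 h2 (γ + δ) (γ + δ + ξ) rfl
    simp only [Multiset.count_add] at I1 I2 I3 I4 I5 I6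
    have hεmem : δ + ξ ∈ E := Multiset.count_pos.mp (by omega)
    have hε0 : δ + ξ ≠ 0 := hE0 _ hεmem
    have zBε := z E B (fun v a b => hBE v b a) _ hεmem
    have J4 := cong_count hε0 (hP2E (δ + ξ) hεmem) (γ + ξ) (γ + δ) hw1
    simp only [Multiset.count_add] at J4
    rcases le_or_gt (Multiset.count (γ + ξ) C) (Multiset.count (γ + ξ) H) with hbr | hbr
    · omega
    · have hηmem : γ + ξ ∈ C := Multiset.count_pos.mp (by omega)
      have hη0 : γ + ξ ≠ 0 := hC0 _ hηmem
      have J5 := cong_count hη0 (hP2C (γ + ξ) hηmem) (δ + ξ) (γ + δ) hw2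
      simp only [Multiset.count_add] at J5
      omega
  · rw [Multiset.mem_inter] at hDE
    have hξ0 : ξ ≠ 0 := hD0 ξ hDE.1
    have h1 := hP2D ξ hDE.1
    have h2 := hP2E ξ hDE.2
    have M1 := cong_count hξ0 h1 γ (γ + ξ) rfl
    have M2 := cong_count hξ0 h2 γ (γ + ξ) rfl
    have M3 := cong_count hξ0 h1 δ (δ + ξ) rfl
    have M4 := cong_count hξ0 h2 δ (δ + ξ) rfl
    have M5 := cong_count hξ0 h1 (γ + δ) (γ + δ + ξ) rfl
    have M6 := cong_count hξ0 h2 (γ + δ) (γ + δ + ξ) rfl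
    simp only [Multiset.count_add] at M1 M2 M3 M4 M5 M6
    have hηmem : γ + ξ ∈ H := Multiset.count_pos.mp (by omega)
    have hη0 : γ + ξ ≠ 0 := hH0 _ hηmem
    have zBη := z H B (fun v a b => hBH v b a) _ hηmem
    have zLη := z H L hHL _ hηmem
    have N1 := cong_count hη0 (hP2H (γ + ξ) hηmem) (δ + ξ) (γ + δ) hw2
    simp only [Multiset.count_add] at N1
    rcases le_or_gt (Multiset.count (δ + ξ) D) (Multiset.count (δ + ξ) E) with hbr | hbr
    · omega
    · have hεmem : δ + ξ ∈ D := Multiset.count_pos.mp (by omega)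
      have hε0 : δ + ξ ≠ 0 := hD0 _ hεmem
      have N2 := cong_count hε0 (hP2D (δ + ξ) hεmem) (γ + ξ) (γ + δ) hw1
      simp only [Multiset.count_add] at N2
      omega
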